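/- arXiv:1711.02592 — 2 statements merged into one kernel-verified Lean document; each statement's English description precedes it below -/
import Mathlib

section
/- The fundamental theorem of symmetric polynomials in the multivariable (vector-valued) setting: for every finite-dimensional k-vector space T (char k = 0), the k-algebra homomorphism ⊗_{i=1}^n Sym(Sym^i T) → (Sym(T^n))^{S_n}, sending the i-th elementary 'symmetric tensor' generators to the corresponding invariants, is surjective. Equivalently, the invariant ring (Sym(T^n))^{S_n} is generated as a k-algebra by the subspaces Sym^{[1^i]}T (polarized elementary symmetric functions) for i = 1,…,n. -/
open MvPolynomial

/-- The polarized elementary symmetric function of degree `i` attached to a covector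
`c : Fin d → k`: writing `L_j = ∑_l c_l X_{j,l}` for the corresponding linear form in
the `j`-th group of variables, it is `∑_{j₁ < ⋯ < j_i} L_{j₁} ⋯ L_{j_i}`.
Since `char k = 0`, these elements span the subspaces `Sym^{[1^i]}T` of the invariant
ring (`Sym^i T` is spanned by `i`-th powers of vectors). -/
noncomputable def polarizedEsymm (k : Type*) [Field k] (n d : ℕ) (i : ℕ)
    (c : Fin d → k) : MvPolynomial (Fin n × Fin d) k :=
  ∑ s ∈ Finset.univ.powersetCard i,
    ∏ j ∈ s, (∑ l : Fin d, MvPolynomial.C (c l) * MvPolynomial.X (j, l))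

/-- The subalgebra of `Sym(T^n) = k[X_{j,l}]` of invariants under the symmetric
group `S_n` permuting the `n` groups of variables. -/
noncomputable def snInvariants (k : Type*) [Field k] (n d : ℕ) :
    Subalgebra k (MvPolynomial (Fin n × Fin d) k) where
  carrier := {p | ∀ σ : Equiv.Perm (Fin n),
    MvPolynomial.rename (Prod.map σ id) p = p}
  mul_mem' := fun hp hq σ => by rw [map_mul, hp σ, hq σ]
  add_mem' := fun hp hq σ => by rw [map_add, hp σ, hq σ]
  algebraMap_mem' := fun r σ => by
    rw [MvPolynomial.algebraMap_eq, MvPolynomial.rename_C]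

section FTSymAux

section Polar


variable (k : Type*) [Field k] (n d : ℕ)

/-- The monomial `∏_l X_{j,l}^{β l}` concentrated in the `j`-th group of variables. -/
noncomputable def grpM (β : Fin d → ℕ) (j : Fin n) : MvPolynomial (Fin n × Fin d) k :=
  ∏ l, X (j, l) ^ β l

/-- The polarized power sum `∑_j ∏_l X_{j,l}^{β l}`. -/
noncomputable def grpP (β : Fin d → ℕ) : MvPolynomial (Fin n × Fin d) k :=
  ∑ j, grpM k n d β j

/-- The subalgebra generated by the polarized elementary symmetric functions. -/
noncomputable def genAlg : Subalgebra k (MvPolynomial (Fin n × Fin d) k) :=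
  Algebra.adjoin k {p | ∃ i ∈ Finset.Icc 1 n, ∃ c : Fin d → k, p = polarizedEsymm k n d i c}

variable {k n d}

lemma grpM_mul (β γ : Fin d → ℕ) (j : Fin n) :
    grpM k n d β j * grpM k n d γ j = grpM k n d (β + γ) j := by
  simp [grpM, ← Finset.prod_mul_distrib, pow_add]

/-- Polarization lemma: if a family of "polynomial combinations" of vectors lies in a
submodule for every choice of scalars, then each coefficient vector lies in it. -/
lemma polar_mem {k M : Type*} [Field k] [Infinite k] [AddCommGroup M] [Module k M]
    (V : Submodule k M) {d : ℕ} (s : Finset (Fin d → ℕ)) (v : (Fin d → ℕ) → M)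
    (h : ∀ c : Fin d → k, (∑ α ∈ s, (∏ l, c l ^ α l) • v α) ∈ V) :
    ∀ α ∈ s, v α ∈ V := by
  intro α hα
  rw [← Submodule.Quotient.mk_eq_zero V]
  set w : (Fin d → ℕ) → M ⧸ V := fun β => Submodule.Quotient.mk (v β) with hw
  have h0 : ∀ c : Fin d → k, ∑ β ∈ s, (∏ l, c l ^ β l) • w β = 0 := by
    intro c
    have : ∑ β ∈ s, (∏ l, c l ^ β l) • w β
        = V.mkQ (∑ β ∈ s, (∏ l, c l ^ β l) • v β) := by
      rw [map_sum]
      simp [hw, Submodule.mkQ_apply]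
    rw [this, Submodule.mkQ_apply, Submodule.Quotient.mk_eq_zero]
    exact h c
  rw [← Module.forall_dual_apply_eq_zero_iff k]
  intro φ
  set p : MvPolynomial (Fin d) k :=
    ∑ β ∈ s, monomial (Finsupp.equivFunOnFinite.symm β) (φ (w β)) with hp
  have hp0 : p = 0 := by
    apply MvPolynomial.funext
    intro x
    rw [map_zero, hp, map_sum]
    have : ∀ β ∈ s, eval x (monomial (Finsupp.equivFunOnFinite.symm β) (φ (w β)))
        = φ ((∏ l, x l ^ β l) • w β) := by
      intro β _
      rw [eval_monomial, Finsupp.prod_pow, map_smul, smul_eq_mul, mul_comm]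
      congr 1
    rw [Finset.sum_congr rfl this, ← map_sum, h0 x, map_zero]
  have hc := congrArg (coeff (Finsupp.equivFunOnFinite.symm α)) hp0
  rw [hp, MvPolynomial.coeff_sum, coeff_zero, Finset.sum_eq_single α
    (fun β _ hne => by
      rw [coeff_monomial, if_neg (fun hh => hne (Finsupp.equivFunOnFinite.symm.injective hh))])
    (fun h' => absurd hα h')] at hc
  rwa [coeff_monomial, if_pos rfl] at hc


end Polar


lemma psum_mem_adjoin (k : Type*) [Field k] (n i : ℕ) :
    psum (Fin n) k i ∈ Algebra.adjoin k
      (Set.range fun j : Fin n => esymm (Fin n) k (j + 1)) := by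
  obtain ⟨q, hq⟩ := esymmAlgHom_surjective (σ := Fin n) (R := k) (n := n)
    (by simp) ⟨psum (Fin n) k i, psum_isSymmetric _ _ i⟩
  have h : aeval (fun j : Fin n => esymm (Fin n) k (j + 1)) q = psum (Fin n) k i := by
    have := congrArg Subtype.val hq
    rwa [esymmAlgHom_apply] at this
  rw [← h, Algebra.adjoin_range_eq_range_aeval]
  exact ⟨q, rfl⟩

lemma pc_mem {k : Type*} [Field k] {n d : ℕ} (i : ℕ) (c : Fin d → k) :
    (∑ j : Fin n, (∑ l, C (c l) * X (j, l)) ^ i) ∈ genAlg k n d := by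
  set L : Fin n → MvPolynomial (Fin n × Fin d) k := fun j => ∑ l, C (c l) * X (j, l) with hL
  have hesymm : ∀ j : Fin n, aeval L (esymm (Fin n) k (j + 1)) = polarizedEsymm k n d (j + 1) c := by
    intro j
    rw [esymm, map_sum, polarizedEsymm]
    refine Finset.sum_congr rfl fun s _ => ?_
    rw [map_prod]
    simp [aeval_X, hL]
  have hsum : ∑ j, L j ^ i = aeval L (psum (Fin n) k i) := by
    rw [psum, map_sum]
    simp
  rw [hsum]
  have hadj := psum_mem_adjoin k n i
  rw [Algebra.adjoin_range_eq_range_aeval] at hadj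
  obtain ⟨q, hq⟩ := hadj
  have hq' : (aeval fun j : Fin n => esymm (Fin n) k (j + 1)) q = psum (Fin n) k i := hq
  rw [← hq', ← AlgHom.comp_apply, comp_aeval]
  have : aeval (fun j : Fin n => aeval L (esymm (Fin n) k (j + 1))) q
      ∈ Algebra.adjoin k (Set.range fun j : Fin n => aeval L (esymm (Fin n) k (j + 1))) := by
    rw [Algebra.adjoin_range_eq_range_aeval]; exact ⟨q, rfl⟩
  refine Algebra.adjoin_le ?_ this
  rintro x ⟨j, rfl⟩
  show (aeval L) (esymm (Fin n) k (j + 1)) ∈ (genAlg k n d : Set _)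
  rw [hesymm j]
  exact Algebra.subset_adjoin ⟨j + 1, Finset.mem_Icc.2 ⟨le_add_self, j.isLt⟩, c, rfl⟩

lemma grpP_mem {k : Type*} [Field k] [CharZero k] {n d : ℕ} (β : Fin d → ℕ) :
    grpP k n d β ∈ genAlg k n d := by
  by_cases h0 : ∑ l, β l = 0
  · have hβ : ∀ l, β l = 0 := by
      intro l
      exact (Finset.sum_eq_zero_iff.mp h0) l (Finset.mem_univ l)
    have : grpP k n d β = (n : MvPolynomial (Fin n × Fin d) k) := by
      simp [grpP, grpM, hβ]
    rw [this]
    exact natCast_mem _ n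
  · set i := ∑ l, β l with hi
    have key : ∀ c : Fin d → k, (∑ α ∈ Finset.piAntidiag Finset.univ i,
        (∏ l, c l ^ α l) • ((Nat.multinomial Finset.univ α) • grpP k n d α))
        ∈ Subalgebra.toSubmodule (genAlg k n d) := by
      intro c
      have hterm : ∀ j : Fin n, (∑ l, C (c l) * X (j, l)) ^ i
          = ∑ α ∈ Finset.piAntidiag Finset.univ i,
            (∏ l, c l ^ α l) • ((Nat.multinomial Finset.univ α) • grpM k n d α j) := by
        intro j
        rw [Finset.sum_pow_eq_sum_piAntidiag]
        refine Finset.sum_congr rfl fun α _ => ?_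
        rw [smul_eq_C_mul, nsmul_eq_mul]
        have : ∏ l, (C (c l) * X (j, l)) ^ α l
            = C (∏ l, c l ^ α l) * grpM k n d α j := by
          rw [map_prod, grpM, ← Finset.prod_mul_distrib]
          refine Finset.prod_congr rfl fun l _ => ?_
          rw [map_pow, mul_pow]
        rw [this]
        ring
      have expand : ∑ j : Fin n, (∑ l, C (c l) * X (j, l)) ^ i
          = ∑ α ∈ Finset.piAntidiag Finset.univ i,
            (∏ l, c l ^ α l) • ((Nat.multinomial Finset.univ α) • grpP k n d α) := by
        simp_rw [hterm, grpP, Finset.smul_sum]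
        exact Finset.sum_comm
      rw [← expand]
      exact pc_mem i c
    have hmem := polar_mem (Subalgebra.toSubmodule (genAlg k n d)) _ _ key β
      (Finset.mem_piAntidiag.2 ⟨rfl, fun l _ => Finset.mem_univ l⟩)
    have hne : ((Nat.multinomial Finset.univ β : ℕ) : k) ≠ 0 :=
      Nat.cast_ne_zero.mpr (Nat.multinomial_pos _ _).ne'
    have h2 := Submodule.smul_mem _ (((Nat.multinomial Finset.univ β : ℕ) : k))⁻¹ hmem
    rw [← Nat.cast_smul_eq_nsmul k, smul_smul, inv_mul_cancel₀ hne, one_smul] at h2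
    exact h2

/-- Sum over injective placements of the group monomials `g m` into distinct groups. -/
noncomputable def injSum (k : Type*) [Field k] (n d : ℕ) (r : ℕ) (g : Fin r → Fin d → ℕ) :
    MvPolynomial (Fin n × Fin d) k :=
  ∑ f : Fin r → Fin n, if Function.Injective f then ∏ m, grpM k n d (g m) (f m) else 0

lemma injSum_zero {k : Type*} [Field k] {n d : ℕ} (g : Fin 0 → Fin d → ℕ) :
    injSum k n d 0 g = 1 := by
  have h1 : ∀ f : Fin 0 → Fin n, Function.Injective f := fun f a => a.elim0
  rw [injSum, Fintype.sum_unique]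
  simp [h1]

lemma grpM_prod_update {k : Type*} [Field k] {n d : ℕ} {r : ℕ}
    (g' : Fin r → Fin d → ℕ) (β : Fin d → ℕ) (f' : Fin r → Fin n) (m : Fin r) :
    grpM k n d β (f' m) * ∏ m', grpM k n d (g' m') (f' m')
      = ∏ m', grpM k n d (Function.update g' m (β + g' m) m') (f' m') := by
  have h : (fun m' => grpM k n d (Function.update g' m (β + g' m) m') (f' m'))
      = Function.update (fun m' => grpM k n d (g' m') (f' m'))
          m (grpM k n d (β + g' m) (f' m)) := by
    funext m'
    rcases eq_or_ne m' m with rfl | hne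
    · simp
    · simp [Function.update_of_ne hne]
  rw [h, Finset.prod_update_of_mem (Finset.mem_univ m),
    ← Finset.mul_prod_erase Finset.univ _ (Finset.mem_univ m), ← mul_assoc, grpM_mul,
    Finset.sdiff_singleton_eq_erase]

lemma injSum_succ {k : Type*} [Field k] {n d : ℕ} (r : ℕ) (g : Fin (r + 1) → Fin d → ℕ) :
    injSum k n d (r + 1) g = grpP k n d (g 0) * injSum k n d r (g ∘ Fin.succ)
      - ∑ m : Fin r, injSum k n d r
          (Function.update (g ∘ Fin.succ) m (g 0 + (g ∘ Fin.succ) m)) := by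
  classical
  have hre : ∀ (F : (Fin (r + 1) → Fin n) → MvPolynomial (Fin n × Fin d) k),
      ∑ f, F f = ∑ p : Fin n × (Fin r → Fin n), F (Fin.cons p.1 p.2) :=
    fun F => (Fintype.sum_equiv (Fin.consEquiv fun _ => Fin n) _ _ (fun p => rfl)).symm
  rw [injSum, hre _, Fintype.sum_prod_type]
  have hterm : ∀ (j : Fin n) (f' : Fin r → Fin n),
      (if Function.Injective (Fin.cons j f' : Fin (r + 1) → Fin n)
        then ∏ m, grpM k n d (g m) ((Fin.cons j f' : Fin (r + 1) → Fin n) m) else 0)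
      = if Function.Injective f' then
          ((if j ∈ Finset.image f' Finset.univ then 0 else grpM k n d (g 0) j)
            * ∏ m, grpM k n d ((g ∘ Fin.succ) m) (f' m)) else 0 := by
    intro j f'
    have hcons : Function.Injective (Fin.cons j f' : Fin (r + 1) → Fin n)
        ↔ j ∉ Set.range f' ∧ Function.Injective f' := Fin.cons_injective_iff
    have hrange : j ∈ Set.range f' ↔ j ∈ Finset.image f' Finset.univ := by
      simp [Set.mem_range, Finset.mem_image, eq_comm]
    have hprod : ∏ m, grpM k n d (g m) ((Fin.cons j f' : Fin (r + 1) → Fin n) m)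
        = grpM k n d (g 0) j * ∏ m, grpM k n d ((g ∘ Fin.succ) m) (f' m) := by
      rw [Fin.prod_univ_succ]
      simp [Function.comp]
    by_cases hf : Function.Injective f'
    · by_cases hj : j ∈ Set.range f'
      · rw [if_neg (by rw [hcons]; tauto), if_pos hf, if_pos (hrange.mp hj), zero_mul]
      · rw [if_pos (hcons.mpr ⟨hj, hf⟩), if_pos hf, if_neg (fun hh => hj (hrange.mpr hh)), hprod]
    · rw [if_neg (by rw [hcons]; tauto), if_neg hf]
  simp_rw [hterm]
  rw [Finset.sum_comm]
  have hinner : ∀ f' : Fin r → Fin n, Function.Injective f' →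
      ∑ j : Fin n, (if j ∈ Finset.image f' Finset.univ then 0 else grpM k n d (g 0) j)
      = grpP k n d (g 0) - ∑ m, grpM k n d (g 0) (f' m) := by
    intro f' hf
    have h1 : ∀ j : Fin n, (if j ∈ Finset.image f' Finset.univ then 0 else grpM k n d (g 0) j)
        = grpM k n d (g 0) j
          - (if j ∈ Finset.image f' Finset.univ then grpM k n d (g 0) j else 0) := by
      intro j; by_cases h : j ∈ Finset.image f' Finset.univ <;> simp [h]
    rw [Finset.sum_congr rfl fun j _ => h1 j, Finset.sum_sub_distrib, ← Finset.sum_filter,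
      Finset.filter_mem_eq_inter, Finset.univ_inter, Finset.sum_image (fun a _ b _ h => hf h)]
    rfl
  have step1 : ∀ f' : Fin r → Fin n,
      ∑ j : Fin n, (if Function.Injective f' then
          ((if j ∈ Finset.image f' Finset.univ then 0 else grpM k n d (g 0) j)
            * ∏ m, grpM k n d ((g ∘ Fin.succ) m) (f' m)) else 0)
      = if Function.Injective f' then
          ((grpP k n d (g 0) - ∑ m, grpM k n d (g 0) (f' m))
            * ∏ m, grpM k n d ((g ∘ Fin.succ) m) (f' m)) else 0 := by
    intro f'
    by_cases hf : Function.Injective f'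
    · simp only [if_pos hf]
      rw [← Finset.sum_mul, hinner f' hf]
    · simp [hf]
  rw [Finset.sum_congr rfl fun f' _ => step1 f']
  rw [show (grpP k n d (g 0) * injSum k n d r (g ∘ Fin.succ))
      = ∑ f' : Fin r → Fin n, grpP k n d (g 0)
          * (if Function.Injective f' then ∏ m, grpM k n d ((g ∘ Fin.succ) m) (f' m) else 0)
    from by rw [injSum, Finset.mul_sum]]
  rw [show (∑ m : Fin r, injSum k n d r
        (Function.update (g ∘ Fin.succ) m (g 0 + (g ∘ Fin.succ) m)))
      = ∑ f' : Fin r → Fin n, ∑ m : Fin r, (if Function.Injective f' then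
          ∏ m', grpM k n d
            ((Function.update (g ∘ Fin.succ) m (g 0 + (g ∘ Fin.succ) m)) m') (f' m') else 0)
    from by simp only [injSum]; exact Finset.sum_comm]
  rw [← Finset.sum_sub_distrib]
  refine Finset.sum_congr rfl fun f' _ => ?_
  by_cases hf : Function.Injective f'
  · simp only [if_pos hf]
    rw [sub_mul, Finset.sum_mul]
    congr 1
    refine Finset.sum_congr rfl fun m _ => ?_
    exact grpM_prod_update (g ∘ Fin.succ) (g 0) f' m
  · simp [hf]

lemma injSum_mem {k : Type*} [Field k] [CharZero k] {n d : ℕ} :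
    ∀ (r : ℕ) (g : Fin r → Fin d → ℕ), injSum k n d r g ∈ genAlg k n d := by
  intro r
  induction r with
  | zero => intro g; rw [injSum_zero]; exact one_mem _
  | succ r ih =>
    intro g
    rw [injSum_succ]
    exact sub_mem (mul_mem (grpP_mem _) (ih _)) (sum_mem fun m _ => ih _)

lemma polarizedEsymm_invariant {k : Type*} [Field k] {n d : ℕ} (i : ℕ) (c : Fin d → k)
    (σ : Equiv.Perm (Fin n)) :
    rename (Prod.map σ id) (polarizedEsymm k n d i c) = polarizedEsymm k n d i c := by
  rw [polarizedEsymm, map_sum]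
  have hterm : ∀ s : Finset (Fin n),
      rename (Prod.map ⇑σ id) (∏ j ∈ s, (∑ l : Fin d, C (c l) * X (j, l)))
      = ∏ j ∈ Finset.image ⇑σ s, (∑ l : Fin d, C (c l) * X (j, l)) := by
    intro s
    rw [map_prod, Finset.prod_image (fun a _ b _ h => σ.injective h)]
    refine Finset.prod_congr rfl fun j _ => ?_
    rw [map_sum]
    refine Finset.sum_congr rfl fun l _ => ?_
    rw [map_mul, rename_C, rename_X]
    rfl
  rw [Finset.sum_congr rfl fun s _ => hterm s]
  refine Finset.sum_nbij' (fun s => Finset.image ⇑σ s) (fun s => Finset.image ⇑σ.symm s)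
    ?_ ?_ ?_ ?_ ?_
  · intro s hs
    rw [Finset.mem_powersetCard] at hs ⊢
    exact ⟨Finset.subset_univ _, by rw [Finset.card_image_of_injective _ σ.injective, hs.2]⟩
  · intro s hs
    rw [Finset.mem_powersetCard] at hs ⊢
    exact ⟨Finset.subset_univ _,
      by rw [Finset.card_image_of_injective _ σ.symm.injective, hs.2]⟩
  · intro s _
    simp [Finset.image_image]
  · intro s _
    simp [Finset.image_image]
  · intro s _
    rfl

lemma sym_monomial_mem {k : Type*} [Field k] [CharZero k] {n d : ℕ}
    (m : (Fin n × Fin d) →₀ ℕ) (cc : k) :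
    ∑ σ : Equiv.Perm (Fin n), rename (Prod.map σ id) (monomial m cc) ∈ genAlg k n d := by
  have hmon : ∀ σ : Equiv.Perm (Fin n), rename (Prod.map ⇑σ id) (monomial m cc)
      = C cc * ∏ j, grpM k n d (fun l => m (j, l)) (σ j) := by
    intro σ
    rw [monomial_eq, Finsupp.prod_pow, map_mul, rename_C, map_prod]
    congr 1
    rw [Fintype.prod_prod_type]
    refine Finset.prod_congr rfl fun j _ => ?_
    rw [grpM]
    refine Finset.prod_congr rfl fun l _ => ?_
    rw [map_pow, rename_X]
    rfl
  rw [Finset.sum_congr rfl fun σ _ => hmon σ, ← Finset.mul_sum]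
  have hsum : ∑ σ : Equiv.Perm (Fin n), ∏ j, grpM k n d (fun l => m (j, l)) (σ j)
      = injSum k n d n (fun j l => m (j, l)) := by
    rw [injSum, ← Finset.sum_filter]
    refine Finset.sum_bij (fun (σ : Equiv.Perm (Fin n)) _ => ⇑σ) ?_ ?_ ?_ ?_
    · intro σ _
      exact Finset.mem_filter.2 ⟨Finset.mem_univ _, σ.injective⟩
    · intro σ₁ _ σ₂ _ h
      exact Equiv.coe_fn_injective h
    · intro f hf
      exact ⟨Equiv.ofBijective f
        ((Finite.injective_iff_bijective).mp (Finset.mem_filter.mp hf).2), Finset.mem_univ _, rfl⟩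
    · intro σ _
      rfl
  rw [hsum]
  exact mul_mem (by rw [← algebraMap_eq]; exact (genAlg k n d).algebraMap_mem cc)
    (injSum_mem n _)

/-- Fundamental theorem of vector-valued symmetric functions: in characteristic
zero, the invariant ring `(Sym(T^n))^{S_n}` is generated as a `k`-algebra by the
polarized elementary symmetric functions of degrees `1, …, n`; equivalently the
algebra homomorphism `⊗_{i=1}^n Sym(Sym^i T) → (Sym(T^n))^{S_n}` is surjective. -/
theorem stmt_3 (k : Type*) [Field k] [CharZero k] (n d : ℕ) :
    Algebra.adjoin k
      {p : MvPolynomial (Fin n × Fin d) k |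
        ∃ i ∈ Finset.Icc 1 n, ∃ c : Fin d → k, p = polarizedEsymm k n d i c} =
    (snInvariants k n d) := by
  apply le_antisymm
  · rw [Algebra.adjoin_le_iff]
    rintro p ⟨i, _, c, rfl⟩
    exact fun σ => polarizedEsymm_invariant i c σ
  · intro p hp
    have hp' : ∀ σ : Equiv.Perm (Fin n), rename (Prod.map σ id) p = p := hp
    have hfac : ∑ σ : Equiv.Perm (Fin n), rename (Prod.map σ id) p
        = (n.factorial : ℕ) • p := by
      rw [Finset.sum_congr rfl fun σ _ => hp' σ, Finset.sum_const, Finset.card_univ,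
        Fintype.card_perm, Fintype.card_fin]
    have hne : ((n.factorial : ℕ) : k) ≠ 0 := Nat.cast_ne_zero.mpr n.factorial_ne_zero
    have hmem : ∑ σ : Equiv.Perm (Fin n), rename (Prod.map σ id) p ∈ genAlg k n d := by
      have hone : ∀ σ : Equiv.Perm (Fin n), rename (Prod.map ⇑σ id) p
          = ∑ m ∈ p.support, rename (Prod.map ⇑σ id) (monomial m (coeff m p)) := by
        intro σ
        rw [← map_sum, p.support_sum_monomial_coeff]
      rw [Finset.sum_congr rfl fun σ _ => hone σ, Finset.sum_comm]
      exact sum_mem fun m _ => sym_monomial_mem m (coeff m p)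
    have : p = ((n.factorial : ℕ) : k)⁻¹ • ((n.factorial : ℕ) • p) := by
      rw [← Nat.cast_smul_eq_nsmul k, smul_smul, inv_mul_cancel₀ hne, one_smul]
    rw [this, ← hfac]
    exact Subalgebra.smul_mem _ hmem _
end FTSymAux
end

section
/- The projection p_n(V) : Cayley_n(V) → Chow_n(V) is a finite morphism, and it is étale (finite étale of degree n) over the open subset Chow'_n(V) of multiplicity-free 0-cycles. -/
set_option maxHeartbeats 1000000
set_option synthInstance.maxHeartbeats 400000



open MvPolynomial

/-- The coordinate ring of (the base change to `V^n` of) the universal spectral cover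
`Cayley_n(V) ⊂ Chow_n(V) × V`: functions on `V^n × V` modulo the ideal generated by
the universal Cayley–Hamilton relations `f_t(v, v₁, …, v_n) = ∏ⱼ (t(v) − t(vⱼ))`,
`t` ranging over all linear forms on `V`. -/
noncomputable def cayleyRing (k : Type*) [Field k] (n d : ℕ) : Type _ :=
  MvPolynomial ((Fin n × Fin d) ⊕ Fin d) k ⧸
    Ideal.span {f : MvPolynomial ((Fin n × Fin d) ⊕ Fin d) k | ∃ c : Fin d → k,
      f = ∏ j : Fin n, (∑ l : Fin d, C (c l) * X (Sum.inr l) -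
        ∑ l : Fin d, C (c l) * X (Sum.inl (j, l)))}

noncomputable instance (k : Type*) [Field k] (n d : ℕ) :
    CommRing (cayleyRing k n d) :=
  inferInstanceAs (CommRing (_ ⧸ _))

/-- The structural ring map `k[Chow_n(V)] → k[Cayley_n(V) ×_{Chow_n(V)} V^n]`. -/
noncomputable def cayleyStructMap (k : Type*) [Field k] (n d : ℕ) :
    (snInvariants k n d) →+* cayleyRing k n d :=
  (Ideal.Quotient.mk _).comp
    ((MvPolynomial.rename Sum.inl).toRingHom.comp (snInvariants k n d).val.toRingHom)

private lemma aux_poly_eval_algebraMap_zero {k R : Type*} [Field k] [Infinite k] [CommRing R]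
    [Algebra k R] (p : Polynomial R) (h : ∀ s : k, p.eval (algebraMap k R s) = 0) : p = 0 := by
  ext m
  rw [Polynomial.coeff_zero]
  by_cases hm : m < p.natDegree + 1
  · refine (Module.forall_dual_apply_eq_zero_iff k (p.coeff m)).mp fun φ => ?_
    set N := p.natDegree + 1 with hN
    set q : Polynomial k := ∑ i ∈ Finset.range N, Polynomial.C (φ (p.coeff i)) * Polynomial.X ^ i
      with hq
    have hqe : ∀ s : k, q.eval s = 0 := by
      intro s
      have h1 : q.eval s = ∑ i ∈ Finset.range N, φ (p.coeff i) * s ^ i := by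
        simp [hq, Polynomial.eval_finset_sum]
      have h2 : φ (p.eval (algebraMap k R s)) = ∑ i ∈ Finset.range N, φ (p.coeff i) * s ^ i := by
        rw [Polynomial.eval_eq_sum_range, map_sum]
        refine Finset.sum_congr rfl fun i _ => ?_
        rw [← map_pow, mul_comm, ← Algebra.smul_def, map_smul, smul_eq_mul, mul_comm]
      rw [h1, ← h2, h s, map_zero]
    have hq0 : q = 0 := Polynomial.zero_of_eval_zero q hqe
    have hqm : q.coeff m = φ (p.coeff m) := by
      rw [hq, Polynomial.finset_sum_coeff]
      rw [Finset.sum_eq_single m (fun i _ hi => by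
        simp [Polynomial.coeff_C_mul, Polynomial.coeff_X_pow, Ne.symm hi])
        (fun hmem => absurd (Finset.mem_range.mpr hm) hmem)]
      simp
    rw [hq0] at hqm
    simpa using hqm.symm
  · exact Polynomial.coeff_eq_zero_of_natDegree_lt (by omega)

private lemma aux_fiber (k : Type*) [Field k] [Infinite k] (n d : ℕ)
    (v : Fin n → Fin d → k) (hv : Function.Injective v) :
    Nonempty ((MvPolynomial (Fin d) k ⧸
        Ideal.span {f : MvPolynomial (Fin d) k | ∃ c : Fin d → k,
          f = ∏ j : Fin n,
            (∑ l : Fin d, C (c l) * X l - C (∑ l : Fin d, c l * v j l))})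
        ≃ₐ[k] (Fin n → k)) := by
  classical
  set S : Set (MvPolynomial (Fin d) k) := {f : MvPolynomial (Fin d) k | ∃ c : Fin d → k,
      f = ∏ j : Fin n, (∑ l : Fin d, C (c l) * X l - C (∑ l : Fin d, c l * v j l))} with hS
  set I : Ideal (MvPolynomial (Fin d) k) := Ideal.span S with hI
  set F : MvPolynomial (Fin d) k →ₐ[k] (Fin n → k) :=
    Pi.algHom _ _ (fun j => MvPolynomial.aeval (v j)) with hF
  have hb : ∀ (c : Fin d → k) (i : Fin n),
      aeval (v i) (∑ l : Fin d, C (c l) * X l) = ∑ l : Fin d, c l * v i l := by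
    intro c i; simp
  have hker : I ≤ RingHom.ker F := by
    rw [hI, Ideal.span_le]
    rintro f ⟨c, rfl⟩
    rw [SetLike.mem_coe, RingHom.mem_ker]
    funext j
    show aeval (v j) _ = 0
    rw [map_prod]
    refine Finset.prod_eq_zero (Finset.mem_univ j) ?_
    rw [map_sub, hb, aeval_C]
    simp
  set Φ : (MvPolynomial (Fin d) k ⧸ I) →ₐ[k] (Fin n → k) :=
    Ideal.Quotient.liftₐ I F (fun a ha => RingHom.mem_ker.mp (hker ha)) with hΦ
  have hΦmk : ∀ (p : MvPolynomial (Fin d) k) (j : Fin n),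
      Φ (Ideal.Quotient.mk I p) j = aeval (v j) p := by
    intro p j
    rw [hΦ, Ideal.Quotient.liftₐ_apply]
    rfl
  rcases Nat.eq_zero_or_pos n with hn | hn
  · -- n = 0 : both sides trivial
    subst hn
    haveI : Subsingleton (Fin 0 → k) := ⟨fun f g => funext fun i => i.elim0⟩
    have hone : (1 : MvPolynomial (Fin d) k) ∈ I :=
      Ideal.subset_span ⟨fun _ => 0, by rw [Fin.prod_univ_zero]⟩
    haveI : Subsingleton (MvPolynomial (Fin d) k ⧸ I) := by
      have h10 : (1 : MvPolynomial (Fin d) k ⧸ I) = 0 := by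
        rw [← map_one (Ideal.Quotient.mk I)]
        exact Ideal.Quotient.eq_zero_iff_mem.mpr hone
      exact subsingleton_of_zero_eq_one h10.symm
    exact ⟨AlgEquiv.ofBijective Φ
      ⟨fun x y _ => Subsingleton.elim x y, fun g => ⟨0, Subsingleton.elim _ _⟩⟩⟩
  · haveI : Nonempty (Fin n) := ⟨⟨0, hn⟩⟩
    -- choose a linear form separating the points
    obtain ⟨c₀, hc₀⟩ : ∃ c₀ : Fin d → k,
        eval c₀ (∏ p ∈ Finset.univ.offDiag,
          (∑ l : Fin d, C (v p.1 l - v p.2 l) * X l : MvPolynomial (Fin d) k)) ≠ 0 := by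
      by_contra hcon
      push_neg at hcon
      have hP : (∏ p ∈ Finset.univ.offDiag,
          (∑ l : Fin d, C (v p.1 l - v p.2 l) * X l : MvPolynomial (Fin d) k)) ≠ 0 := by
        rw [Finset.prod_ne_zero_iff]
        intro p hp
        obtain ⟨-, -, hne⟩ := Finset.mem_offDiag.mp hp
        obtain ⟨l₀, hl₀⟩ := Function.ne_iff.mp (hv.ne hne)
        intro hzero
        have := congrArg (eval (fun m => if m = l₀ then (1:k) else 0)) hzero
        simp only [map_sum, map_mul, eval_C, eval_X, map_zero] at this
        rw [Finset.sum_eq_single l₀ (fun m _ hm => by simp [hm]) (by simp)] at this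
        simp at this
        exact hl₀ (sub_eq_zero.mp this)
      exact hP (MvPolynomial.funext fun x => by rw [hcon x, map_zero])
    set a : Fin n → k := fun j => ∑ l : Fin d, c₀ l * v j l with ha_def
    have ha : Function.Injective a := by
      intro i j hij
      by_contra hne
      rw [map_prod] at hc₀
      have hfac := Finset.prod_ne_zero_iff.mp hc₀ (i, j)
        (Finset.mem_offDiag.mpr ⟨Finset.mem_univ _, Finset.mem_univ _, hne⟩)
      apply hfac
      simp only [map_sum, map_mul, eval_C, eval_X]
      have : ∀ l : Fin d, (v i l - v j l) * c₀ l = c₀ l * v i l - c₀ l * v j l := by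
        intro l; ring
      rw [Finset.sum_congr rfl (fun l _ => this l), Finset.sum_sub_distrib]
      rw [ha_def] at hij
      simpa using sub_eq_zero.mpr hij
    -- notation
    set Rq := MvPolynomial (Fin d) k ⧸ I with hRq
    set mk : MvPolynomial (Fin d) k →+* Rq := Ideal.Quotient.mk I with hmk
    set alg : k →+* Rq := algebraMap k Rq with halg
    have hmkC : ∀ r : k, mk (C r) = alg r := by
      intro r
      rw [halg, ← MvPolynomial.algebraMap_eq]
      rfl
    set M : (Fin d → k) → Rq := fun c => mk (∑ l : Fin d, C (c l) * X l) with hM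
    set b : (Fin d → k) → Fin n → k := fun c i => ∑ l : Fin d, c l * v i l with hbdef
    have hgen : ∀ c : Fin d → k, ∏ i : Fin n, (M c - alg (b c i)) = 0 := by
      intro c
      have h1 : ∀ i : Fin n, M c - alg (b c i) = mk (∑ l : Fin d, C (c l) * X l - C (b c i)) := by
        intro i; rw [map_sub, hmkC]
      rw [Finset.prod_congr rfl (fun i _ => h1 i), ← map_prod]
      exact Ideal.Quotient.eq_zero_iff_mem.mpr (Ideal.subset_span ⟨c, rfl⟩)
    set L : Rq := M c₀ with hL
    have hfull : ∏ i : Fin n, (L - alg (a i)) = 0 := hgen c₀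
    set Eps : Fin n → Rq := fun j => Polynomial.aeval L (Lagrange.basis Finset.univ a j) with hEpsdef
    have hEps : ∀ j, Eps j = alg (∏ i ∈ Finset.univ.erase j, (a j - a i)⁻¹) *
        ∏ i ∈ Finset.univ.erase j, (L - alg (a i)) := by
      intro j
      rw [hEpsdef]
      show Polynomial.aeval L (Lagrange.basis Finset.univ a j) = _
      rw [Lagrange.basis, map_prod]
      have h1 : ∀ i ∈ Finset.univ.erase j,
          Polynomial.aeval L (Lagrange.basisDivisor (a j) (a i))
            = alg ((a j - a i)⁻¹) * (L - alg (a i)) := by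
        intro i _
        rw [Lagrange.basisDivisor]
        simp [Algebra.smul_def]
        rfl
      rw [Finset.prod_congr rfl h1, Finset.prod_mul_distrib, map_prod]
    have hPfull : ∀ j : Fin n, (L - alg (a j)) * ∏ i ∈ Finset.univ.erase j, (L - alg (a i)) = 0 := by
      intro j
      exact (Finset.mul_prod_erase Finset.univ (fun i => L - alg (a i))
        (Finset.mem_univ j)).trans hfull
    have hsum : ∑ j : Fin n, Eps j = 1 := by
      rw [hEpsdef, ← map_sum,
        Lagrange.sum_basis (Set.injOn_of_injective ha) Finset.univ_nonempty, map_one]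
    have hLj : ∀ j, Eps j * (L - alg (a j)) = 0 := by
      intro j
      rw [hEps j, mul_assoc, mul_comm (∏ i ∈ Finset.univ.erase j, (L - alg (a i))), hPfull,
        mul_zero]
    have horth : ∀ i j : Fin n, i ≠ j → Eps i * Eps j = 0 := by
      intro i j hij
      have hmem : j ∈ Finset.univ.erase i := Finset.mem_erase.mpr ⟨hij.symm, Finset.mem_univ j⟩
      have h1 := Finset.mul_prod_erase (Finset.univ.erase i) (fun m => L - alg (a m)) hmem
      have h2 : (∏ m ∈ Finset.univ.erase i, (L - alg (a m))) *
          (∏ m ∈ Finset.univ.erase j, (L - alg (a m))) = 0 := by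
        calc (∏ m ∈ Finset.univ.erase i, (L - alg (a m))) *
            (∏ m ∈ Finset.univ.erase j, (L - alg (a m)))
            = ((L - alg (a j)) * ∏ m ∈ (Finset.univ.erase i).erase j, (L - alg (a m))) *
              (∏ m ∈ Finset.univ.erase j, (L - alg (a m))) := by rw [h1]
          _ = (∏ m ∈ (Finset.univ.erase i).erase j, (L - alg (a m))) *
              ((L - alg (a j)) * ∏ m ∈ Finset.univ.erase j, (L - alg (a m))) := by ring
          _ = 0 := by rw [hPfull j, mul_zero]
      rw [hEps i, hEps j, mul_mul_mul_comm, h2, mul_zero]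
    have hidem : ∀ j, Eps j * Eps j = Eps j := by
      intro j
      have h1 : Eps j * (∑ i : Fin n, Eps i) = Eps j := by rw [hsum, mul_one]
      rw [Finset.mul_sum, Finset.sum_eq_single j (fun i _ hi => horth j i (Ne.symm hi))
        (fun h => absurd (Finset.mem_univ j) h)] at h1
      exact h1
    have hpow : ∀ j, Eps j ^ n = Eps j := by
      intro j
      obtain ⟨m, rfl⟩ : ∃ m, n = m + 1 := ⟨n - 1, by omega⟩
      exact IsIdempotentElem.pow_succ_eq m (hidem j)
    -- the key commutation relation
    have key : ∀ (c : Fin d → k) (j : Fin n), Eps j * (M c - alg (b c j)) = 0 := by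
      intro c j
      have hMlin : ∀ s : k, M (fun l => c₀ l + s * c l) = L + alg s * M c := by
        intro s
        have h1 : (∑ l : Fin d, C (c₀ l + s * c l) * X l : MvPolynomial (Fin d) k)
            = (∑ l : Fin d, C (c₀ l) * X l) + C s * ∑ l : Fin d, C (c l) * X l := by
          rw [Finset.mul_sum, ← Finset.sum_add_distrib]
          refine Finset.sum_congr rfl fun l _ => ?_
          rw [C_add, C_mul]; ring
        show mk _ = _
        rw [h1, map_add, map_mul, hmkC]
      have hblin : ∀ (s : k) (i : Fin n), b (fun l => c₀ l + s * c l) i = a i + s * b c i := by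
        intro s i
        show ∑ l : Fin d, (c₀ l + s * c l) * v i l = _
        rw [ha_def, hbdef]
        simp only [Finset.mul_sum, ← Finset.sum_add_distrib]
        refine Finset.sum_congr rfl fun l _ => by ring
      have hs : ∀ s : k, ∏ i : Fin n, ((L - alg (a i)) + alg s * (M c - alg (b c i))) = 0 := by
        intro s
        have h0 := hgen (fun l => c₀ l + s * c l)
        rw [Finset.prod_congr rfl (fun i _ => show M (fun l => c₀ l + s * c l) -
            alg (b (fun l => c₀ l + s * c l) i)
            = (L - alg (a i)) + alg s * (M c - alg (b c i)) from ?_)] at h0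
        · exact h0
        · rw [hMlin, hblin, map_add, map_mul]; ring
      set u : Fin n → Rq := fun i => alg (a j - a i) * Eps j with hu
      set w : Fin n → Rq := fun i => Eps j * (M c - alg (b c i)) with hw
      have hA : ∀ i, Eps j * (L - alg (a i)) = u i := by
        intro i
        have h1 : L - alg (a i) = (L - alg (a j)) + alg (a j - a i) := by
          rw [map_sub]; ring
        rw [h1, mul_add, hLj j, zero_add, mul_comm]
      have hs2 : ∀ s : k, ∏ i : Fin n, (u i + alg s * w i) = 0 := by
        intro s
        have h1 : ∀ i : Fin n, u i + alg s * w i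
            = Eps j * ((L - alg (a i)) + alg s * (M c - alg (b c i))) := by
          intro i
          rw [← hA i, hw]; ring
        rw [Finset.prod_congr rfl (fun i _ => h1 i), Finset.prod_mul_distrib,
          Finset.prod_const, Finset.card_univ, Fintype.card_fin, hs s, mul_zero]
      have huj : u j = 0 := by rw [hu]; simp
      set Pp : Polynomial Rq := Polynomial.C (w j) *
        ∏ i ∈ Finset.univ.erase j, (Polynomial.C (u i) + Polynomial.C (w i) * Polynomial.X)
        with hPp
      have hXP : Polynomial.X * Pp = 0 := by
        apply aux_poly_eval_algebraMap_zero (k := k)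
        intro s
        have h1 := hs2 s
        rw [← Finset.mul_prod_erase Finset.univ _ (Finset.mem_univ j), huj, zero_add] at h1
        have h2 : (Polynomial.X * Pp).eval (algebraMap k Rq s)
            = (alg s * w j) * ∏ i ∈ Finset.univ.erase j, (u i + alg s * w i) := by
          rw [Polynomial.eval_mul, Polynomial.eval_X, hPp, Polynomial.eval_mul,
            Polynomial.eval_C, Polynomial.eval_prod]
          rw [Finset.prod_congr rfl (fun i _ => show (Polynomial.C (u i) +
            Polynomial.C (w i) * Polynomial.X).eval (algebraMap k Rq s)
              = u i + alg s * w i by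
            rw [Polynomial.eval_add, Polynomial.eval_C, Polynomial.eval_mul,
              Polynomial.eval_C, Polynomial.eval_X]
            rw [halg, mul_comm])]
          rw [halg]; ring
        rw [h2, h1]
      have hPp0 : Pp = 0 := by
        ext m
        have := congrArg (fun q => Polynomial.coeff q (m + 1)) hXP
        simpa [Polynomial.coeff_X_mul] using this
      have hev0 := congrArg (Polynomial.eval (0 : Rq)) hPp0
      rw [hPp, Polynomial.eval_mul, Polynomial.eval_C, Polynomial.eval_prod] at hev0
      rw [Finset.prod_congr rfl (fun i _ => show (Polynomial.C (u i) +
          Polynomial.C (w i) * Polynomial.X).eval (0 : Rq) = u i by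
        simp)] at hev0
      simp only [Polynomial.eval_zero] at hev0
      -- hev0 : w j * ∏ i ∈ erase j, u i = 0
      have hprodu : ∏ i ∈ Finset.univ.erase j, u i
          = alg (∏ i ∈ Finset.univ.erase j, (a j - a i)) * Eps j ^ (n - 1) := by
        rw [hu]
        rw [Finset.prod_mul_distrib, Finset.prod_const, map_prod,
          Finset.card_erase_of_mem (Finset.mem_univ j), Finset.card_univ, Fintype.card_fin]
      have hlam : (∏ i ∈ Finset.univ.erase j, (a j - a i)) ≠ 0 := by
        rw [Finset.prod_ne_zero_iff]
        intro i hi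
        exact sub_ne_zero.mpr (ha.ne (Finset.ne_of_mem_erase hi).symm)
      have hunit : IsUnit (alg (∏ i ∈ Finset.univ.erase j, (a j - a i))) :=
        (Ne.isUnit hlam).map alg
      have h3 : alg (∏ i ∈ Finset.univ.erase j, (a j - a i)) * (Eps j ^ (n - 1) * w j) = 0 := by
        calc alg (∏ i ∈ Finset.univ.erase j, (a j - a i)) * (Eps j ^ (n - 1) * w j)
            = w j * (alg (∏ i ∈ Finset.univ.erase j, (a j - a i)) * Eps j ^ (n - 1)) := by ring
          _ = w j * ∏ i ∈ Finset.univ.erase j, u i := by rw [hprodu]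
          _ = 0 := hev0
      have h4 : Eps j ^ (n - 1) * w j = 0 := by
        exact (hunit.mul_right_eq_zero).mp h3
      have h5 : Eps j ^ (n - 1) * w j = Eps j * (M c - alg (b c j)) := by
        rw [hw, ← mul_assoc, ← pow_succ]
        have : n - 1 + 1 = n := by omega
        rw [this, hpow j]
      rw [← h5, h4]
    -- coordinates act as scalars on each idempotent
    have hXl : ∀ (l : Fin d) (j : Fin n), Eps j * mk (X l) = alg (v j l) * Eps j := by
      intro l j
      have h1 := key (Pi.single l 1) j
      have hM1 : M (Pi.single l 1) = mk (X l) := by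
        show mk _ = _
        congr 1
        rw [Finset.sum_eq_single l (fun m _ hm => by
          rw [Pi.single_eq_of_ne hm, map_zero, zero_mul])
          (fun h => absurd (Finset.mem_univ l) h)]
        rw [Pi.single_eq_same, map_one, one_mul]
      have hb1 : b (Pi.single l 1) j = v j l := by
        simp only [hbdef]
        rw [Finset.sum_eq_single l (fun m _ hm => by rw [Pi.single_eq_of_ne hm, zero_mul])
          (fun h => absurd (Finset.mem_univ l) h)]
        rw [Pi.single_eq_same, one_mul]
      rw [hM1, hb1] at h1
      calc Eps j * mk (X l) = Eps j * (mk (X l) - alg (v j l)) + alg (v j l) * Eps j := by ring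
        _ = alg (v j l) * Eps j := by rw [h1, zero_add]
    -- multiplication rule against idempotents
    have hclaim : ∀ (p : MvPolynomial (Fin d) k) (j : Fin n),
        mk p * Eps j = alg (aeval (v j) p) * Eps j := by
      intro p j
      induction p using MvPolynomial.induction_on with
      | C r =>
        rw [hmkC, aeval_C]
        norm_num
      | add p q ihp ihq =>
        rw [map_add, map_add, add_mul, ihp, ihq, map_add, add_mul]
      | mul_X p l ih =>
        rw [map_mul, map_mul, aeval_X]
        calc mk p * mk (X l) * Eps j = mk p * (Eps j * mk (X l)) := by ring
          _ = mk p * (alg (v j l) * Eps j) := by rw [hXl]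
          _ = alg (v j l) * (mk p * Eps j) := by ring
          _ = alg (v j l) * (alg (aeval (v j) p) * Eps j) := by rw [ih]
          _ = alg ((aeval (v j)) p * v j l) * Eps j := by rw [map_mul]; ring
    -- injectivity
    have hinj : Function.Injective Φ := by
      rw [injective_iff_map_eq_zero]
      intro x hx
      obtain ⟨p, rfl⟩ := Ideal.Quotient.mk_surjective (I := I) x
      have hev : ∀ j : Fin n, aeval (v j) p = 0 := by
        intro j
        have := congrFun (congrArg (fun g : Fin n → k => g) hx) j
        rw [← hΦmk p j]
        exact congrFun hx j
      calc mk p = mk p * 1 := (mul_one _).symm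
        _ = ∑ j : Fin n, mk p * Eps j := by rw [← hsum, Finset.mul_sum]
        _ = 0 := Finset.sum_eq_zero fun j _ => by
            rw [hclaim p j, hev j, map_zero, zero_mul]
    -- surjectivity
    have hΦEps : ∀ (m j : Fin n), Φ (Eps m) j
        = Polynomial.eval (a j) (Lagrange.basis Finset.univ a m) := by
      intro m j
      have h1 : Eps m = mk (Polynomial.aeval (∑ l : Fin d, C (c₀ l) * X l)
          (Lagrange.basis Finset.univ a m)) := by
        rw [hEpsdef]
        show Polynomial.aeval L _ = _
        have : L = (Ideal.Quotient.mkₐ k I) (∑ l : Fin d, C (c₀ l) * X l) := rfl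
        rw [this, Polynomial.aeval_algHom_apply]
        rfl
      rw [h1, hΦmk]
      rw [← Polynomial.aeval_algHom_apply (MvPolynomial.aeval (v j)), hb c₀ j,
        ← Polynomial.coe_aeval_eq_eval]
    have hsurj : Function.Surjective Φ := by
      intro g
      refine ⟨∑ m : Fin n, alg (g m) * Eps m, ?_⟩
      have h1 : Φ (∑ m : Fin n, alg (g m) * Eps m) = ∑ m : Fin n, g m • Φ (Eps m) := by
        rw [map_sum]
        refine Finset.sum_congr rfl fun m _ => ?_
        rw [map_mul]
        rw [show (alg (g m) : Rq) = algebraMap k Rq (g m) from rfl, AlgHom.commutes,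
          Algebra.smul_def]
      funext j
      rw [h1]
      have h2 : (∑ m : Fin n, g m • Φ (Eps m)) j = ∑ m : Fin n, g m * Φ (Eps m) j := by
        simp
      rw [h2]
      rw [Finset.sum_congr rfl (fun m _ => by rw [hΦEps m j])]
      rw [Finset.sum_eq_single j (fun m _ hm => by
        rw [Lagrange.eval_basis_of_ne hm (Finset.mem_univ j), mul_zero])
        (fun h => absurd (Finset.mem_univ j) h)]
      rw [Lagrange.eval_basis_self (Set.injOn_of_injective ha) (Finset.mem_univ j), mul_one]
    exact ⟨AlgEquiv.ofBijective Φ ⟨hinj, hsurj⟩⟩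

private lemma aux_finite (k : Type*) [Field k] (n d : ℕ) :
    (cayleyStructMap k n d).Finite := by
  classical
  set A := snInvariants k n d with hA
  letI : Algebra A (cayleyRing k n d) := (cayleyStructMap k n d).toAlgebra
  set I : Ideal (MvPolynomial ((Fin n × Fin d) ⊕ Fin d) k) :=
    Ideal.span {f : MvPolynomial ((Fin n × Fin d) ⊕ Fin d) k | ∃ c : Fin d → k,
      f = ∏ j : Fin n, (∑ l : Fin d, C (c l) * X (Sum.inr l) -
        ∑ l : Fin d, C (c l) * X (Sum.inl (j, l)))} with hIdef
  set mk : MvPolynomial ((Fin n × Fin d) ⊕ Fin d) k →+* cayleyRing k n d :=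
    Ideal.Quotient.mk I with hmk
  set ψ : MvPolynomial (Fin n × Fin d) k →+* cayleyRing k n d :=
    mk.comp (MvPolynomial.rename Sum.inl).toRingHom with hψ
  have hφψ : algebraMap A (cayleyRing k n d) = ψ.comp A.toSubring.subtype :=
    RingHom.ext fun x => rfl
  -- the universal monic polynomial killing the variables in column l
  have hcol : ∀ l : Fin d, ∃ qA : Polynomial A, qA.Monic ∧
      ∀ z : cayleyRing k n d, Polynomial.eval₂ (algebraMap A (cayleyRing k n d)) z qA
        = ∏ j' : Fin n, (z - mk (X (Sum.inl (j', l)))) := by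
    intro l
    set q : Polynomial (MvPolynomial (Fin n × Fin d) k) :=
      ∏ j' : Fin n, (Polynomial.X - Polynomial.C (MvPolynomial.X (j', l))) with hq
    have hqcoeff : ∀ m : ℕ, q.coeff m ∈ A := by
      intro m σ
      set rσ : MvPolynomial (Fin n × Fin d) k →+* MvPolynomial (Fin n × Fin d) k :=
        (MvPolynomial.rename (Prod.map (⇑σ) id)).toRingHom with hrσ
      have hfac : ∀ j' : Fin n, (Polynomial.X - Polynomial.C
          (MvPolynomial.X (j', l) : MvPolynomial (Fin n × Fin d) k)).map rσ
          = Polynomial.X - Polynomial.C (MvPolynomial.X (σ j', l)) := by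
        intro j'
        rw [Polynomial.map_sub, Polynomial.map_X, Polynomial.map_C, hrσ]
        simp [MvPolynomial.rename_X]
      have hqmap : q.map rσ = q := by
        rw [hq, Polynomial.map_prod, Finset.prod_congr rfl (fun j' _ => hfac j')]
        exact Equiv.prod_comp σ (fun j' => Polynomial.X - Polynomial.C (MvPolynomial.X (j', l)))
      show MvPolynomial.rename (Prod.map (⇑σ) id) (q.coeff m) = q.coeff m
      calc MvPolynomial.rename (Prod.map (⇑σ) id) (q.coeff m)
          = (q.map rσ).coeff m := by rw [Polynomial.coeff_map]; rfl
        _ = q.coeff m := by rw [hqmap]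
    have hcsub : (↑q.coeffs : Set (MvPolynomial (Fin n × Fin d) k)) ⊆ A.toSubring := by
      intro x hx
      obtain ⟨m, -, rfl⟩ := Polynomial.mem_coeffs_iff.mp hx
      exact Subalgebra.mem_toSubring.mpr (hqcoeff m)
    have hfacψ : ∀ j' : Fin n, (Polynomial.X - Polynomial.C
        (MvPolynomial.X (j', l) : MvPolynomial (Fin n × Fin d) k)).map ψ
        = Polynomial.X - Polynomial.C (mk (X (Sum.inl (j', l)))) := by
      intro j'
      rw [Polynomial.map_sub, Polynomial.map_X, Polynomial.map_C, hψ]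
      simp [MvPolynomial.rename_X]
    refine ⟨q.toSubring A.toSubring hcsub, (Polynomial.monic_toSubring _ _ _).mpr ?_, ?_⟩
    · exact Polynomial.monic_prod_of_monic _ _ fun _ _ => Polynomial.monic_X_sub_C _
    · intro z
      rw [hφψ, ← Polynomial.eval₂_map, Polynomial.map_toSubring]
      rw [Polynomial.eval₂_eq_eval_map, hq, Polynomial.map_prod,
        Finset.prod_congr rfl (fun j' _ => hfacψ j'), Polynomial.eval_prod]
      exact Finset.prod_congr rfl fun j' _ => by
        rw [Polynomial.eval_sub, Polynomial.eval_X, Polynomial.eval_C]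
  have hint : ∀ p : (Fin n × Fin d) ⊕ Fin d, IsIntegral A (mk (X p)) := by
    rintro (⟨j, l⟩ | l) <;> obtain ⟨qA, hmon, hev⟩ := hcol l
    · refine ⟨qA, hmon, ?_⟩
      rw [hev]
      exact Finset.prod_eq_zero (Finset.mem_univ j) (sub_self _)
    · refine ⟨qA, hmon, ?_⟩
      rw [hev]
      have hfacE : ∀ j : Fin n, mk (X (Sum.inr l)) - mk (X (Sum.inl (j, l)))
          = mk (X (Sum.inr l) - X (Sum.inl (j, l))) := fun j => (map_sub mk _ _).symm
      rw [Finset.prod_congr rfl (fun j _ => hfacE j), ← map_prod]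
      refine Ideal.Quotient.eq_zero_iff_mem.mpr (Ideal.subset_span ⟨Pi.single l 1, ?_⟩)
      refine Finset.prod_congr rfl fun j _ => ?_
      have hcollapse : ∀ u : Fin d → ((Fin n × Fin d) ⊕ Fin d),
          (X (u l) : MvPolynomial ((Fin n × Fin d) ⊕ Fin d) k)
          = ∑ m : Fin d, (C ((Pi.single l (1:k) : Fin d → k) m) : MvPolynomial ((Fin n × Fin d) ⊕ Fin d) k) * X (u m) := by
        intro u
        rw [Finset.sum_eq_single l (fun m _ hm => by
          rw [Pi.single_eq_of_ne hm, map_zero, zero_mul])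
          (fun h => absurd (Finset.mem_univ l) h)]
        rw [Pi.single_eq_same, map_one, one_mul]
      rw [hcollapse (fun m => Sum.inr m), hcollapse (fun m => Sum.inl (j, m))]
  -- the variables generate everything
  have hadj : Algebra.adjoin A (Set.range fun p : (Fin n × Fin d) ⊕ Fin d => mk (X p)) = ⊤ := by
    rw [eq_top_iff]
    rintro x -
    obtain ⟨p, rfl⟩ := Ideal.Quotient.mk_surjective (I := I) x
    induction p using MvPolynomial.induction_on with
    | C r =>
      have h1 : mk (C r) = algebraMap A (cayleyRing k n d) (algebraMap k A r) := by
        rw [hφψ]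
        show mk (C r) = ψ (((algebraMap k A r) : A) : MvPolynomial (Fin n × Fin d) k)
        have h2 : (((algebraMap k A r) : A) : MvPolynomial (Fin n × Fin d) k) = C r := by
          simp [MvPolynomial.algebraMap_eq]
        rw [h2, hψ]
        show mk (C r) = mk (MvPolynomial.rename Sum.inl (C r))
        rw [MvPolynomial.rename_C]
      show mk (C r) ∈ Algebra.adjoin A (Set.range fun p : (Fin n × Fin d) ⊕ Fin d => mk (X p))
      rw [h1]
      exact Subalgebra.algebraMap_mem _ _
    | add p q ihp ihq =>
      show mk (p + q) ∈ _
      rw [map_add]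
      exact add_mem ihp ihq
    | mul_X p i ih =>
      show mk (p * X i) ∈ _
      rw [map_mul]
      exact mul_mem ih (Algebra.subset_adjoin ⟨i, rfl⟩)
  have hfg := fg_adjoin_of_finite (Set.finite_range _)
    (by rintro x ⟨p, rfl⟩; exact hint p)
  rw [hadj, Algebra.top_toSubmodule] at hfg
  show Module.Finite A (cayleyRing k n d)
  exact ⟨hfg⟩

/-- The projection `p_n(V) : Cayley_n(V) → Chow_n(V)` is a finite morphism, and it is
finite étale of degree `n` over the multiplicity-free locus `Chow'_n(V)`: the first
conjunct says the coordinate ring of the universal spectral cover is module-finite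
over that of `Chow_n(V)`; the second says that the fiber over any multiplicity-free
0-cycle `[v₁, …, v_n]` (the `vⱼ` pairwise distinct) is `n` reduced points,
i.e. its coordinate ring is isomorphic to `k^n` as a `k`-algebra. -/
theorem stmt_12 (k : Type*) [Field k] [IsAlgClosed k] [CharZero k] (n d : ℕ) :
    (cayleyStructMap k n d).Finite ∧
    ∀ v : Fin n → Fin d → k, Function.Injective v →
      Nonempty ((MvPolynomial (Fin d) k ⧸
        Ideal.span {f : MvPolynomial (Fin d) k | ∃ c : Fin d → k,
          f = ∏ j : Fin n,
            (∑ l : Fin d, C (c l) * X l - C (∑ l : Fin d, c l * v j l))})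
        ≃ₐ[k] (Fin n → k)) := by
  haveI : Infinite k := inferInstance
  exact ⟨aux_finite k n d, fun v hv => aux_fiber k n d v hv⟩
end
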